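/- If p : ℝⁿ → ℝ is a quasiconvex polynomial of odd degree d, then every superlevel set {x : p(x) ≥ α} is convex. -/

import Mathlib

open Filter Topology Finset

private lemma eval_smul_hom {n : ℕ} {m : ℕ} (φ : MvPolynomial (Fin n) ℝ)
    (h : φ.IsHomogeneous m) (c : ℝ) (x : Fin n → ℝ) :
    MvPolynomial.eval (c • x) φ = c ^ m * MvPolynomial.eval x φ := by
  rw [MvPolynomial.eval_eq, MvPolynomial.eval_eq, Finset.mul_sum]
  refine Finset.sum_congr rfl fun d hd => ?_
  have hdeg : ∑ i ∈ d.support, d i = m := by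
    have h1 := h (MvPolynomial.mem_support_iff.mp hd)
    simpa [Finsupp.weight_apply, Finsupp.sum] using h1
  have : ∏ i ∈ d.support, (c • x) i ^ d i
      = c ^ m * ∏ i ∈ d.support, x i ^ d i := by
    simp only [Pi.smul_apply, smul_eq_mul, mul_pow]
    rw [Finset.prod_mul_distrib, Finset.prod_pow_eq_pow_sum, hdeg]
  rw [this]; ring

private lemma eval_line {n : ℕ} (q : MvPolynomial (Fin n) ℝ) (u c : Fin n → ℝ) (s : ℝ) :
    Polynomial.eval s (MvPolynomial.aeval
      (fun i => Polynomial.C (u i) + Polynomial.C (c i) * Polynomial.X) q)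
      = MvPolynomial.eval (u + s • c) q := by
  induction q using MvPolynomial.induction_on with
  | C a => simp
  | add p q hp hq => simp [hp, hq]
  | mul_X q i hq =>
      simp only [map_mul, MvPolynomial.aeval_X, Polynomial.eval_mul, Polynomial.eval_add,
        Polynomial.eval_C, Polynomial.eval_mul, Polynomial.eval_X, hq, MvPolynomial.eval_mul,
        MvPolynomial.eval_X, Pi.add_apply, Pi.smul_apply, smul_eq_mul]
      ring

private lemma tendsto_aux {n : ℕ} (p : MvPolynomial (Fin n) ℝ) (hd0 : p.totalDegree ≠ 0)
    (x w : Fin n → ℝ)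
    (hw : MvPolynomial.eval w (MvPolynomial.homogeneousComponent p.totalDegree p) < 0) :
    Tendsto (fun t : ℝ => MvPolynomial.eval (x + t • w) p) atTop atBot := by
  set d := p.totalDegree with hd
  set L := MvPolynomial.eval w (MvPolynomial.homogeneousComponent d p) with hL
  have hratio : Tendsto (fun t : ℝ => MvPolynomial.eval (x + t • w) p / t ^ d) atTop (𝓝 L) := by
    have hsum : ∀ t : ℝ, 0 < t →
        MvPolynomial.eval (x + t • w) p / t ^ d
          = ∑ i ∈ Finset.range (d + 1),
              MvPolynomial.eval (t⁻¹ • x + w) (MvPolynomial.homogeneousComponent i p)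
                * (t ^ i / t ^ d) := by
      intro t ht
      have hxw : x + t • w = t • (t⁻¹ • x + w) := by
        rw [smul_add, smul_smul, mul_inv_cancel₀ ht.ne', one_smul]
      conv_lhs => rw [← MvPolynomial.sum_homogeneousComponent p]
      rw [map_sum, Finset.sum_div]
      refine Finset.sum_congr rfl fun i _ => ?_
      rw [hxw, eval_smul_hom _ (MvPolynomial.homogeneousComponent_isHomogeneous i p)]
      ring
    have hLsum : L = ∑ i ∈ Finset.range (d + 1),
        (if i = d then L else 0) := by
      rw [Finset.sum_ite_eq' (Finset.range (d + 1)) d fun _ => L,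
        if_pos (Finset.self_mem_range_succ d)]
    have hlim : Tendsto (fun t : ℝ => ∑ i ∈ Finset.range (d + 1),
        MvPolynomial.eval (t⁻¹ • x + w) (MvPolynomial.homogeneousComponent i p)
          * (t ^ i / t ^ d)) atTop (𝓝 L) := by
      rw [hLsum]
      refine tendsto_finset_sum _ fun i hi => ?_
      have hg : Tendsto (fun t : ℝ =>
          MvPolynomial.eval (t⁻¹ • x + w) (MvPolynomial.homogeneousComponent i p)) atTop
          (𝓝 (MvPolynomial.eval w (MvPolynomial.homogeneousComponent i p))) := by
        have h1 : Tendsto (fun t : ℝ => t⁻¹ • x + w) atTop (𝓝 ((0 : ℝ) • x + w)) :=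
          (tendsto_inv_atTop_zero.smul_const x).add_const w
        rw [zero_smul, zero_add] at h1
        exact ((MvPolynomial.continuous_eval _).tendsto w).comp h1
      rcases eq_or_lt_of_le (Nat.lt_succ_iff.mp (Finset.mem_range.mp hi)) with hieq | hilt
      · subst hieq
        have hr : Tendsto (fun t : ℝ => t ^ d / t ^ d) atTop (𝓝 1) := by
          refine Tendsto.congr' ?_ tendsto_const_nhds
          filter_upwards [eventually_gt_atTop (0 : ℝ)] with t ht
          rw [div_self (pow_ne_zero _ ht.ne')]
        rw [if_pos rfl]
        have := hg.mul hr
        rw [mul_one] at this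
        exact this
      · have hr : Tendsto (fun t : ℝ => t ^ i / t ^ d) atTop (𝓝 0) := by
          have h2 : Tendsto (fun t : ℝ => (t ^ (d - i))⁻¹) atTop (𝓝 0) :=
            (tendsto_pow_atTop (Nat.sub_ne_zero_of_lt hilt)).inv_tendsto_atTop
          refine Tendsto.congr' ?_ h2
          filter_upwards [eventually_gt_atTop (0 : ℝ)] with t ht
          rw [inv_eq_one_div, div_eq_div_iff (pow_pos ht _).ne' (pow_pos ht _).ne',
            one_mul, ← pow_add, Nat.add_sub_cancel' hilt.le]
        rw [if_neg hilt.ne]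
        have := hg.mul hr
        rw [mul_zero] at this
        exact this
    refine hlim.congr' ?_
    filter_upwards [eventually_gt_atTop (0 : ℝ)] with t ht
    exact (hsum t ht).symm
  have hpow : Tendsto (fun t : ℝ => t ^ d) atTop atTop := tendsto_pow_atTop hd0
  have hmul := hratio.neg_mul_atTop hw hpow
  refine hmul.congr' ?_
  filter_upwards [eventually_gt_atTop (0 : ℝ)] with t ht
  rw [div_mul_cancel₀ _ (pow_ne_zero _ ht.ne')]

private lemma key {n : ℕ} (p : MvPolynomial (Fin n) ℝ) (γ : ℝ)
    (hconv : Convex ℝ {x : Fin n → ℝ | MvPolynomial.eval x p ≤ γ})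
    (x w : Fin n → ℝ) {b : ℝ} (hb0 : 0 ≤ b) (hb1 : b < 1)
    (hz : MvPolynomial.eval (x + b • w) p ≤ γ)
    (htend : Tendsto (fun t : ℝ => MvPolynomial.eval (x + t • w) p) atTop atBot) :
    MvPolynomial.eval (x + w) p ≤ γ := by
  obtain ⟨T, hT1, hTle⟩ : ∃ T : ℝ, 1 ≤ T ∧ MvPolynomial.eval (x + T • w) p ≤ γ := by
    have h1 := htend.eventually (eventually_le_atBot γ)
    obtain ⟨T, hT⟩ := ((eventually_ge_atTop (1 : ℝ)).and h1).exists
    exact ⟨T, hT.1, hT.2⟩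
  have hTb : 0 < T - b := by linarith
  set lam := (T - 1) / (T - b) with hlam
  set mu := (1 - b) / (T - b) with hmu
  have hlam0 : 0 ≤ lam := div_nonneg (by linarith) hTb.le
  have hmu0 : 0 ≤ mu := div_nonneg (by linarith) hTb.le
  have hsum : lam + mu = 1 := by
    rw [hlam, hmu, ← add_div]
    rw [div_eq_one_iff_eq hTb.ne']; ring
  have hcoef : lam * b + mu * T = 1 := by
    rw [hlam, hmu, div_mul_eq_mul_div, div_mul_eq_mul_div, ← add_div,
      div_eq_one_iff_eq hTb.ne']; ring
  have hmem := hconv hz hTle hlam0 hmu0 hsum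
  have hpoint : lam • (x + b • w) + mu • (x + T • w)
      = (lam + mu) • x + (lam * b + mu * T) • w := by module
  rw [hpoint, hsum, hcoef, one_smul, one_smul] at hmem
  exact hmem

theorem stmt_1 (n : ℕ) (p : MvPolynomial (Fin n) ℝ) (hodd : Odd p.totalDegree)
    (hq : ∀ α : ℝ, Convex ℝ {x : Fin n → ℝ | MvPolynomial.eval x p ≤ α}) :
    ∀ α : ℝ, Convex ℝ {x : Fin n → ℝ | α ≤ MvPolynomial.eval x p} := by
  intro α x hx y hy a b ha hb hab
  simp only [Set.mem_setOf_eq] at hx hy ⊢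
  by_contra hlt
  push_neg at hlt
  set d := p.totalDegree with hd
  have hd0 : d ≠ 0 := by rintro h; rw [h] at hodd; simp at hodd
  have hp0 : p ≠ 0 := by
    intro h; exact hd0 (by simp [hd, h])
  -- positivity of a and b
  have hb1 : b ≤ 1 := by linarith
  rcases eq_or_lt_of_le hb with hb' | hbpos
  · have : a = 1 := by linarith
    rw [← hb', this] at hlt
    simp only [one_smul, zero_smul, add_zero] at hlt
    linarith
  rcases eq_or_lt_of_le ha with ha' | hapos
  · have : b = 1 := by linarith
    rw [← ha', this] at hlt
    simp only [one_smul, zero_smul, zero_add] at hlt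
    linarith
  have hblt1 : b < 1 := by linarith
  have halt1 : a < 1 := by linarith
  -- the top homogeneous component is nonzero
  have hh0 : MvPolynomial.homogeneousComponent d p ≠ 0 := by
    obtain ⟨m, hm, hmdeg⟩ := p.support.exists_mem_eq_sup
      (MvPolynomial.support_nonempty.mpr hp0) (fun s => s.sum fun _ e => e)
    intro hzero
    have hco := MvPolynomial.coeff_homogeneousComponent (n := d) (φ := p) m
    have hdm : m.degree = d := by
      rw [hd, MvPolynomial.totalDegree, hmdeg]; rfl
    rw [hzero, if_pos hdm] at hco
    exact MvPolynomial.mem_support_iff.mp hm hco.symm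
  obtain ⟨v0, hv0⟩ : ∃ v, MvPolynomial.eval v (MvPolynomial.homogeneousComponent d p) ≠ 0 := by
    by_contra hcon
    push_neg at hcon
    exact hh0 (MvPolynomial.funext fun v => by simpa using hcon v)
  set z := a • x + b • y with hz
  set γ := (MvPolynomial.eval z p + α) / 2 with hγ
  have hzγ : MvPolynomial.eval z p < γ := by rw [hγ]; linarith
  have hγα : γ < α := by rw [hγ]; linarith
  set u := y - x with hu
  set c := v0 - u with hc
  -- continuity: find δ
  have hev : ∀ᶠ s : ℝ in 𝓝 0, γ < MvPolynomial.eval (y + s • c) p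
      ∧ MvPolynomial.eval (z + (b * s) • c) p < γ := by
    have c1 : Continuous fun s : ℝ => MvPolynomial.eval (y + s • c) p :=
      (MvPolynomial.continuous_eval p).comp (by continuity)
    have c2 : Continuous fun s : ℝ => MvPolynomial.eval (z + (b * s) • c) p :=
      (MvPolynomial.continuous_eval p).comp (by continuity)
    have h1 : γ < MvPolynomial.eval (y + (0 : ℝ) • c) p := by
      simp only [zero_smul, add_zero]; linarith
    have h2 : MvPolynomial.eval (z + (b * (0 : ℝ)) • c) p < γ := by
      simp only [mul_zero, zero_smul, add_zero]; exact hzγ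
    exact (c1.continuousAt.eventually (eventually_gt_nhds h1)).and
      (c2.continuousAt.eventually (eventually_lt_nhds h2))
  obtain ⟨δ, hδ0, hδ⟩ := Metric.eventually_nhds_iff.mp hev
  -- univariate polynomial along the perturbation, to find good s
  set G : Polynomial ℝ := MvPolynomial.aeval
      (fun i => Polynomial.C (u i) + Polynomial.C (c i) * Polynomial.X)
      (MvPolynomial.homogeneousComponent d p) with hG
  have hG0 : G ≠ 0 := by
    intro h0
    apply hv0
    have := eval_line (MvPolynomial.homogeneousComponent d p) u c 1
    rw [← hG, h0] at this
    simp only [Polynomial.eval_zero] at this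
    have huv : u + (1 : ℝ) • c = v0 := by rw [hc, one_smul]; abel
    rw [huv] at this
    exact this.symm
  have hroots := Polynomial.finite_setOf_isRoot hG0
  obtain ⟨s, hsIoo, hsroot⟩ :
      ((Set.Ioo (0 : ℝ) δ) \ {t | G.IsRoot t}).Nonempty :=
    ((Set.Ioo_infinite hδ0).diff hroots).nonempty
  obtain ⟨hs0, hsδ⟩ := hsIoo
  set w := u + s • c with hw
  have hwh : MvPolynomial.eval w (MvPolynomial.homogeneousComponent d p) ≠ 0 := by
    intro h0
    apply hsroot
    show G.IsRoot s
    rw [Polynomial.IsRoot, hG, eval_line]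
    exact h0
  have hsd : dist s 0 < δ := by
    rw [Real.dist_eq, sub_zero, abs_of_pos hs0]; exact hsδ
  have hy' : γ < MvPolynomial.eval (y + s • c) p := (hδ hsd).1
  have hz' : MvPolynomial.eval (z + (b * s) • c) p < γ := (hδ hsd).2
  -- identities
  have idA : z + (b * s) • c = x + b • w := by
    rw [hw, hu, hz]
    have ha' : a = 1 - b := by linarith
    rw [ha']; module
  have idB : y + s • c = x + w := by
    rw [hw, hu]; module
  have idC : (y + s • c) + a • (-w) = z + (b * s) • c := by
    rw [hw, hu, hz]
    have hb' : b = 1 - a := by linarith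
    rw [hb']; module
  have idD : (y + s • c) + (-w) = x := by
    rw [hw, hu]; module
  rcases lt_or_gt_of_ne hwh with hneg | hpos
  · -- eval w h < 0 : go from x in direction w
    have htend := tendsto_aux p hd0 x w hneg
    have hkey := key p γ (hq γ) x w hb hblt1 (by rw [← idA]; exact hz'.le) htend
    rw [← idB] at hkey
    linarith
  · -- eval w h > 0 : go from y + s•c in direction -w
    have hnegw : MvPolynomial.eval (-w) (MvPolynomial.homogeneousComponent d p) < 0 := by
      have hsm : (-1 : ℝ) • w = -w := by module
      have := eval_smul_hom _ (MvPolynomial.homogeneousComponent_isHomogeneous d p) (-1 : ℝ) w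
      rw [hsm, hodd.neg_one_pow] at this
      rw [this]; linarith
    have htend := tendsto_aux p hd0 (y + s • c) (-w) hnegw
    have hkey := key p γ (hq γ) (y + s • c) (-w) ha halt1
      (by rw [idC]; exact hz'.le) htend
    rw [idD] at hkey
    linarith
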